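/- Let D be a residually finite Dedekind domain that is not a Goldman domain, let R be a commutative D-algebra, and let 𝔪 be a maximal ideal of R. If the field R/𝔪 is finitely generated as a D-algebra, then R/𝔪 is a finite field. -/

import Mathlib

/-- An integral domain `D` is a *Goldman domain* if its fraction field is a
finitely generated `D`-algebra. -/
def IsGoldmanDomain (D : Type*) [CommRing D] [IsDomain D] : Prop :=
  Algebra.FiniteType D (FractionRing D)

/-- If some nonzero element lies in every maximal ideal of a Dedekind domain,
then the domain is a Goldman domain. -/
lemma isGoldmanDomain_of_mem_jacobson
    (D : Type*) [CommRing D] [IsDomain D] [IsDedekindDomain D]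
    (a : D) (ha : a ≠ 0) (hmem : ∀ M : Ideal D, M.IsMaximal → a ∈ M) :
    IsGoldmanDomain D := by
  have hle : Submonoid.powers a ≤ nonZeroDivisors D := by
    rintro x ⟨n, rfl⟩
    exact pow_mem (mem_nonZeroDivisors_of_ne_zero ha) n
  let L := Localization.Away a
  haveI : IsDomain L := IsLocalization.isDomain_localization hle
  -- every maximal ideal of `L` is ⊥
  have hmaxbot : ∀ M : Ideal L, M.IsMaximal → M = ⊥ := by
    intro M hM
    have hcomap : (M.comap (algebraMap D L)) = ⊥ := by
      by_contra hne
      haveI := hM.isPrime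
      haveI : (M.comap (algebraMap D L)).IsPrime := Ideal.IsPrime.comap _
      have hmax : (M.comap (algebraMap D L)).IsMaximal :=
        Ideal.IsPrime.isMaximal inferInstance hne
      have haM : algebraMap D L a ∈ M := hmem _ hmax
      have : IsUnit (algebraMap D L a) :=
        IsLocalization.map_units L (⟨a, Submonoid.mem_powers a⟩ : Submonoid.powers a)
      exact hM.ne_top (M.eq_top_of_isUnit_mem haM this)
    have := IsLocalization.map_comap (Submonoid.powers a) L M
    rw [show Ideal.under D M = M.comap (algebraMap D L) from rfl, hcomap] at this
    simpa using this.symm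
  have hfield : IsField L := by
    refine ⟨exists_pair_ne L, mul_comm, ?_⟩
    intro x hx
    by_contra hnu
    have hns : ¬ IsUnit x := by
      intro h
      obtain ⟨u, rfl⟩ := h
      exact hnu ⟨(u⁻¹ : Lˣ), by simp⟩
    have hspan : Ideal.span {x} ≠ ⊤ := by
      exact fun h => hns (Ideal.span_singleton_eq_top.mp h)
    obtain ⟨M, hMmax, hleM⟩ := Ideal.exists_le_maximal _ hspan
    have : x ∈ (⊥ : Ideal L) := by
      rw [← hmaxbot M hMmax]
      exact hleM (Ideal.subset_span rfl)
    exact hx (by simpa using this)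
  -- `L` sits between `D` and its fraction field
  letI : Algebra L (FractionRing D) :=
    IsLocalization.localizationAlgebraOfSubmonoidLe L (FractionRing D)
      (Submonoid.powers a) (nonZeroDivisors D) hle
  haveI : IsScalarTower D L (FractionRing D) :=
    IsLocalization.localization_isScalarTower_of_submonoid_le L (FractionRing D)
      (Submonoid.powers a) (nonZeroDivisors D) hle
  haveI : IsFractionRing L (FractionRing D) :=
    IsFractionRing.isFractionRing_of_isDomain_of_isLocalization (Submonoid.powers a) L
      (FractionRing D)
  have hsurj : Function.Surjective (algebraMap L (FractionRing D)) :=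
    (IsFractionRing.surjective_iff_isField).mpr hfield
  have hft : Algebra.FiniteType D L :=
    haveI := IsLocalization.Away.finitePresentation (S := L) a
    Algebra.FiniteType.of_finitePresentation
  exact @Algebra.FiniteType.of_surjective _ _ _ _ _ _ _ _ hft
    (IsScalarTower.toAlgHom D L (FractionRing D)) hsurj

/-- Let `D` be a residually finite Dedekind domain that is not a Goldman domain, let `R`
be a commutative `D`-algebra, and let `𝔪` be a maximal ideal of `R`.  If the field
`R ⧸ 𝔪` is finitely generated as a `D`-algebra, then `R ⧸ 𝔪` is a finite field. -/
theorem finite_residue_field_of_finiteType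
    (D : Type*) [CommRing D] [IsDomain D] [IsDedekindDomain D]
    (hres : ∀ I : Ideal D, I.IsMaximal → Finite (D ⧸ I))
    (hng : ¬ IsGoldmanDomain D)
    (R : Type*) [CommRing R] [Algebra D R]
    (𝔪 : Ideal R) [𝔪.IsMaximal]
    (hfg : Algebra.FiniteType D (R ⧸ 𝔪)) :
    IsField (R ⧸ 𝔪) ∧ Finite (R ⧸ 𝔪) := by
  -- `D` is a Jacobson ring
  haveI hjac : IsJacobsonRing D := by
    rw [isJacobsonRing_iff_prime_eq]
    intro P hP
    rcases eq_or_ne P ⊥ with rfl | hne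
    · -- Jacobson radical is trivial, else `D` would be a Goldman domain
      by_contra hcon
      have : ∃ a ∈ Ideal.jacobson (⊥ : Ideal D), a ≠ 0 := by
        by_contra h
        push_neg at h
        exact hcon (le_antisymm (fun x hx => by simpa using h x hx) bot_le)
      obtain ⟨a, haj, ha⟩ := this
      refine hng (isGoldmanDomain_of_mem_jacobson D a ha ?_)
      intro M hM
      exact Ideal.mem_sInf.mp haj ⟨bot_le, hM⟩
    · exact Ideal.jacobson_eq_self_of_isMaximal (H := hP.isMaximal hne)
  letI : Field (R ⧸ 𝔪) := Ideal.Quotient.field 𝔪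
  haveI : Module.Finite D (R ⧸ 𝔪) :=
    finite_of_finite_type_of_isJacobsonRing D (R ⧸ 𝔪)
  haveI : Algebra.IsIntegral D (R ⧸ 𝔪) := Algebra.IsIntegral.of_finite D (R ⧸ 𝔪)
  set p := RingHom.ker (algebraMap D (R ⧸ 𝔪)) with hp
  have hpmax : p.IsMaximal := by
    haveI : (⊥ : Ideal (R ⧸ 𝔪)).IsMaximal := Ideal.bot_isMaximal
    have : ((⊥ : Ideal (R ⧸ 𝔪)).comap (algebraMap D (R ⧸ 𝔪))).IsMaximal :=
      Ideal.isMaximal_comap_of_isIntegral_of_isMaximal (R := D) (S := R ⧸ 𝔪) ⊥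
    simpa [hp, RingHom.ker] using this
  haveI : Finite (D ⧸ p) := hres p hpmax
  letI : Algebra (D ⧸ p) (R ⧸ 𝔪) := (RingHom.kerLift (algebraMap D (R ⧸ 𝔪))).toAlgebra
  haveI : IsScalarTower D (D ⧸ p) (R ⧸ 𝔪) :=
    IsScalarTower.of_algebraMap_eq fun x =>
      (RingHom.kerLift_mk (algebraMap D (R ⧸ 𝔪)) x).symm
  haveI : Module.Finite (D ⧸ p) (R ⧸ 𝔪) :=
    Module.Finite.of_restrictScalars_finite D (D ⧸ p) (R ⧸ 𝔪)
  refine ⟨Field.toIsField _, Module.finite_of_finite (D ⧸ p)⟩
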